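/- The union S = ∪_{k≥1} S_k equals the class of subdivision graphs of trees: a graph T belongs to S if and only if T = S(G) for some tree G, where S(G) is obtained from G by subdividing each edge exactly once. -/

import Mathlib

open scoped Classical


/-- `SStar k G VS X` says that the subgraph of `G` induced on the vertex set `VS`,
together with the distinguished vertex set `X ⊆ VS`, is a member of the family
`S_k^*` (defined recursively: `S_1^* = {P_1}` with `X` the single vertex; a member
of `S_{k}^*` for `k ≥ 2` is obtained from disjoint members `S^1 ∈ S_{k-1}^*` and
`S^2 ∈ ∪_{i<k} S_i^*` by joining a new origin vertex `z` to chosen vertices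
`x₁ ∈ X(S^1)` and `x₂ ∈ X(S^2)`, with `X = X(S^1) ∪ X(S^2)`). -/
def SStar {V : Type} : ℕ → SimpleGraph V → Set V → Set V → Prop
  | 0, _, _, _ => False
  | 1, _, VS, X => ∃ x : V, VS = {x} ∧ X = {x}
  | (k+2), G, VS, X => ∃ (z : V) (A B : Set V) (x₁ x₂ : V),
      z ∈ VS ∧ z ∉ X ∧ X ⊆ VS ∧ A ∪ B = VS \ {z} ∧ Disjoint A B ∧
      x₁ ∈ A ∩ X ∧ x₂ ∈ B ∩ X ∧
      (∀ v ∈ VS, G.Adj z v ↔ (v = x₁ ∨ v = x₂)) ∧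
      (∀ a ∈ A, ∀ b ∈ B, ¬ G.Adj a b) ∧
      SStar (k+1) G A (X ∩ A) ∧
      (∃ i, ∃ _ : 1 ≤ i ∧ i ≤ k + 1, SStar i G B (X ∩ B))
termination_by k _ _ _ => k
decreasing_by all_goals omega

/-- The subgraph of `G` induced on `VS` with distinguished set `X` is a member of
the family `S_k = S_k^* \ (S_1 ∪ ⋯ ∪ S_{k-1})`. -/
def SFamilyAt (k : ℕ) {V : Type} (G : SimpleGraph V) (VS X : Set V) : Prop :=
  SStar k G VS X ∧ ∀ i < k, ¬ SStar i G VS X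

/-- The graph `G` itself, with distinguished set `X`, is a member of the family `S_k`. -/
def SFamily (k : ℕ) {V : Type} (G : SimpleGraph V) (X : Set V) : Prop :=
  SFamilyAt k G Set.univ X

/-- `G` contains a substructure from `S_k`: a subgraph (induced on some vertex set
`VS`, with distinguished set `X`) belonging to `S_k` such that every vertex of `X`
has the same degree in the subgraph as in `G`, i.e. all `G`-neighbors of vertices
of `X` lie in `VS`. -/
def HasSubstructure (k : ℕ) {V : Type} (G : SimpleGraph V) : Prop :=
  ∃ VS X : Set V, SFamilyAt k G VS X ∧ ∀ x ∈ X, ∀ w : V, G.Adj x w → w ∈ VS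


/-- The subdivision graph `S(G)` of `G`: every edge `uv` is replaced by a path
`u - w_{uv} - v` through a new vertex. -/
def subdivisionGraph {U : Type} (G : SimpleGraph U) :
    SimpleGraph (U ⊕ G.edgeSet) :=
  SimpleGraph.fromRel (fun a b => ∃ (v : U) (e : G.edgeSet),
    a = Sum.inl v ∧ b = Sum.inr e ∧ v ∈ (e : Sym2 U))

section Infra

variable {V : Type}

/-- Reachability inside a vertex set `S`. -/
def ReachIn (T : SimpleGraph V) (S : Set V) (u v : V) : Prop :=
  Relation.ReflTransGen (fun a b => a ∈ S ∧ b ∈ S ∧ T.Adj a b) u v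

namespace ReachIn

variable {T : SimpleGraph V} {S S' A B : Set V} {u v w : V}

lemma refl : ReachIn T S u u := Relation.ReflTransGen.refl

lemma single (hu : u ∈ S) (hv : v ∈ S) (h : T.Adj u v) : ReachIn T S u v :=
  Relation.ReflTransGen.single ⟨hu, hv, h⟩

lemma tail (h : ReachIn T S u v) (hv : v ∈ S) (hw : w ∈ S) (hadj : T.Adj v w) :
    ReachIn T S u w := Relation.ReflTransGen.tail h ⟨hv, hw, hadj⟩

lemma trans (h : ReachIn T S u v) (h' : ReachIn T S v w) : ReachIn T S u w :=
  Relation.ReflTransGen.trans h h'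

lemma symm (h : ReachIn T S u v) : ReachIn T S v u :=
  (@Relation.ReflTransGen.stdSymm _ _ ⟨fun a b hab => ⟨hab.2.1, hab.1, hab.2.2.symm⟩⟩).symm _ _ h

lemma mono (hS : S ⊆ S') (h : ReachIn T S u v) : ReachIn T S' u v :=
  Relation.ReflTransGen.mono (p := fun a b => a ∈ S' ∧ b ∈ S' ∧ T.Adj a b)
    (fun a b (hab : a ∈ S ∧ b ∈ S ∧ T.Adj a b) => ⟨hS hab.1, hS hab.2.1, hab.2.2⟩) u v h

/-- If `A` is closed under `S`-steps, a reachability inside `S` starting in `A`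
stays in `A` and is a reachability inside `A`. -/
lemma closed (hA : ∀ p q, p ∈ A → q ∈ S → T.Adj p q → q ∈ A)
    (hu : u ∈ A) (h : ReachIn T S u v) : v ∈ A ∧ ReachIn T A u v := by
  induction h with
  | refl => exact ⟨hu, ReachIn.refl⟩
  | tail _ hst ih =>
      obtain ⟨hbA, hr⟩ := ih
      have hcA := hA _ _ hbA hst.2.1 hst.2.2
      exact ⟨hcA, hr.tail hbA hcA hst.2.2⟩

end ReachIn

/-- The "good structure" abstraction of membership in some `S_k`. -/
def GoodOn (T : SimpleGraph V) (VS X : Set V) : Prop :=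
  X ⊆ VS ∧ X.Nonempty ∧
  (∀ u ∈ VS, ∀ v ∈ VS, T.Adj u v → (u ∈ X ↔ v ∉ X)) ∧
  (∀ z ∈ VS, z ∉ X → ∃ a b : V, a ∈ X ∧ a ∈ VS ∧ b ∈ X ∧ b ∈ VS ∧ a ≠ b ∧
    ∀ w ∈ VS, T.Adj z w ↔ w = a ∨ w = b) ∧
  (∀ u ∈ VS, ∀ v ∈ VS, ReachIn T VS u v) ∧
  (∀ z ∈ VS, z ∉ X → ∀ a ∈ VS, ∀ b ∈ VS, T.Adj z a → T.Adj z b → a ≠ b →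
    ¬ ReachIn T (VS \ {z}) a b)

end Infra


section LemmaF

variable {V : Type}

/-- If `z'` lies in `A` and `a b ∈ A`, a reachability from `a` to `b` inside
`VS \ {z'}` can be pulled back into `A \ {z'}`. -/
lemma cross_reach {T : SimpleGraph V} {VS A B : Set V} {z x₁ x₂ z' a b : V}
    (hABV : A ∪ B = VS \ {z}) (hd : Disjoint A B)
    (hAB : ∀ p ∈ A, ∀ q ∈ B, ¬ T.Adj p q)
    (hzc : ∀ v ∈ VS, T.Adj z v ↔ v = x₁ ∨ v = x₂)
    (hx₁ : x₁ ∈ A) (hx₂ : x₂ ∈ B)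
    (ha : a ∈ A) (hb : b ∈ A)
    (h : ReachIn T (VS \ {z'}) a b) :
    ReachIn T (A \ {z'}) a b := by
  have key : ∀ v, ReachIn T (VS \ {z'}) a v →
      (v ∈ A ∧ ReachIn T (A \ {z'}) a v) ∨
      ((v = z ∨ v ∈ B) ∧ ReachIn T (A \ {z'}) a x₁) := by
    intro v hv
    induction hv with
    | refl => exact Or.inl ⟨ha, ReachIn.refl⟩
    | @tail p q hr hst ih =>
        obtain ⟨hpS, hqS, hadj⟩ := hst
        rcases ih with ⟨hpA, hrA⟩ | ⟨hpZB, hrx⟩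
        · by_cases hqz : q = z
          · subst hqz
            have hzp : T.Adj q p := hadj.symm
            have hp : p = x₁ ∨ p = x₂ := (hzc p hpS.1).mp hzp
            have hpx : p = x₁ := by
              rcases hp with h1 | h1
              · exact h1
              · exact absurd (h1 ▸ hpA) (fun hh => Set.disjoint_left.mp hd hh hx₂)
            exact Or.inr ⟨Or.inl rfl, hpx ▸ hrA⟩
          · have hqAB : q ∈ A ∪ B := by
              rw [hABV]; exact ⟨hqS.1, by simpa using hqz⟩
            rcases hqAB with hqA | hqB
            · exact Or.inl ⟨hqA, hrA.tail ⟨hpA, hpS.2⟩ ⟨hqA, hqS.2⟩ hadj⟩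
            · exact absurd hadj (hAB p hpA q hqB)
        · rcases hpZB with rfl | hpB
          · have hq : q = x₁ ∨ q = x₂ := (hzc q hqS.1).mp hadj
            rcases hq with rfl | rfl
            · exact Or.inl ⟨hx₁, hrx⟩
            · exact Or.inr ⟨Or.inr hx₂, hrx⟩
          · by_cases hqz : q = z
            · exact Or.inr ⟨Or.inl hqz, hrx⟩
            · have hqAB : q ∈ A ∪ B := by
                rw [hABV]; exact ⟨hqS.1, by simpa using hqz⟩
              rcases hqAB with hqA | hqB
              · exact absurd hadj.symm (hAB q hqA p hpB)
              · exact Or.inr ⟨Or.inr hqB, hrx⟩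
  rcases key b h with ⟨_, hr⟩ | ⟨hbz, _⟩
  · exact hr
  · exfalso
    rcases hbz with rfl | hbB
    · have : b ∈ VS \ {b} := by rw [← hABV]; exact Or.inl hb
      exact this.2 rfl
    · exact Set.disjoint_left.mp hd hb hbB

end LemmaF

section LemmaFmain

variable {V : Type}

lemma sstar_goodOn (T : SimpleGraph V) :
    ∀ (k : ℕ) (VS X : Set V), SStar k T VS X → GoodOn T VS X := by
  intro k
  induction k using Nat.strong_induction_on with
  | _ k ih =>
    obtain _ | (_ | k) := k
    · intro VS X h; exact absurd (show SStar 0 T VS X from h) (by rw [SStar.eq_1]; exact id)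
    · intro VS X h
      have h1 : SStar 1 T VS X := h
      rw [SStar.eq_2] at h1
      obtain ⟨x, rfl, rfl⟩ := h1
      refine ⟨le_refl _, ⟨x, rfl⟩, ?_, ?_, ?_, ?_⟩
      · rintro u rfl v rfl hadj; exact absurd hadj (T.irrefl)
      · rintro z rfl hz; exact absurd rfl hz
      · rintro u rfl v rfl; exact ReachIn.refl
      · rintro z rfl hz; exact absurd rfl hz
    · intro VS X h
      rw [SStar.eq_3] at h
      obtain ⟨z, A, B, x₁, x₂, hzV, hzX, hXV, hABV, hd, hx₁, hx₂, hzc, hAB, hA, i, ⟨hi1, hi2⟩, hB⟩ := h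
      obtain ⟨gA1, gA2, gA3, gA4, gA5, gA6⟩ := ih (k+1) (by omega) A (X ∩ A) hA
      obtain ⟨gB1, gB2, gB3, gB4, gB5, gB6⟩ := ih i (by omega) B (X ∩ B) hB
      have hAVz : A ⊆ VS \ {z} := by rw [← hABV]; exact Set.subset_union_left
      have hBVz : B ⊆ VS \ {z} := by rw [← hABV]; exact Set.subset_union_right
      have hAV : A ⊆ VS := fun p hp => (hAVz hp).1
      have hBV : B ⊆ VS := fun p hp => (hBVz hp).1
      have hAz : ∀ p ∈ A, p ≠ z := fun p hp => by simpa using (hAVz hp).2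
      have hBz : ∀ p ∈ B, p ≠ z := fun p hp => by simpa using (hBVz hp).2
      have hdAB : ∀ p, p ∈ A → p ∈ B → False := fun p h1 h2 => Set.disjoint_left.mp hd h1 h2
      have hcases : ∀ v ∈ VS, v = z ∨ v ∈ A ∨ v ∈ B := by
        intro v hv
        by_cases hvz : v = z
        · exact Or.inl hvz
        · have : v ∈ A ∪ B := by rw [hABV]; exact ⟨hv, by simpa using hvz⟩
          exact Or.inr this
      have hzadj : ∀ v ∈ VS, T.Adj v z → v = x₁ ∨ v = x₂ :=
        fun v hv hadj => (hzc v hv).mp hadj.symm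
      have hx₁V : x₁ ∈ VS := hAV hx₁.1
      have hx₂V : x₂ ∈ VS := hBV hx₂.1
      have hadjzx₁ : T.Adj z x₁ := (hzc x₁ hx₁V).mpr (Or.inl rfl)
      have hadjzx₂ : T.Adj z x₂ := (hzc x₂ hx₂V).mpr (Or.inr rfl)
      refine ⟨hXV, ⟨x₁, hx₁.2⟩, ?_, ?_, ?_, ?_⟩
      · -- bipartite
        intro u hu v hv hadj
        rcases hcases u hu with rfl | huA | huB
        · have hvX : v ∈ X := by
            rcases (hzc v hv).mp hadj with rfl | rfl
            · exact hx₁.2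
            · exact hx₂.2
          simp [hzX, hvX]
        · rcases hcases v hv with rfl | hvA | hvB
          · have huX : u ∈ X := by
              rcases hzadj u hu hadj with rfl | rfl
              · exact hx₁.2
              · exact hx₂.2
            exact iff_of_true huX hzX
          · have := gA3 u huA v hvA hadj
            simp only [Set.mem_inter_iff, huA, hvA, and_true] at this
            exact this
          · exact absurd hadj (hAB u huA v hvB)
        · rcases hcases v hv with rfl | hvA | hvB
          · have huX : u ∈ X := by
              rcases hzadj u hu hadj with rfl | rfl
              · exact hx₁.2
              · exact hx₂.2
            exact iff_of_true huX hzX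
          · exact absurd hadj.symm (hAB v hvA u huB)
          · have := gB3 u huB v hvB hadj
            simp only [Set.mem_inter_iff, huB, hvB, and_true] at this
            exact this
      · -- degree two
        intro z' hz'V hz'X
        rcases hcases z' hz'V with rfl | hz'A | hz'B
        · exact ⟨x₁, x₂, hx₁.2, hx₁V, hx₂.2, hx₂V,
            fun h => hdAB x₁ hx₁.1 (h ▸ hx₂.1), hzc⟩
        · have hz'XA : z' ∉ X ∩ A := fun h => hz'X h.1
          obtain ⟨a, b, haX, haA, hbX, hbA, hab, hchar⟩ := gA4 z' hz'A hz'XA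
          refine ⟨a, b, haX.1, hAV haA, hbX.1, hAV hbA, hab, ?_⟩
          intro w hw
          rcases hcases w hw with rfl | hwA | hwB
          · constructor
            · intro hadj
              rcases hzadj z' hz'V hadj with rfl | rfl
              · exact absurd hx₁.2 hz'X
              · exact absurd hx₂.2 hz'X
            · intro hor
              rcases hor with h1 | h1
              · exact absurd h1.symm (hAz a haA)
              · exact absurd h1.symm (hAz b hbA)
          · exact hchar w hwA
          · constructor
            · intro hadj; exact absurd hadj (hAB z' hz'A w hwB)
            · intro hor
              rcases hor with h1 | h1
              · exact hdAB a haA (h1 ▸ hwB) |>.elim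
              · exact hdAB b hbA (h1 ▸ hwB) |>.elim
        · have hz'XB : z' ∉ X ∩ B := fun h => hz'X h.1
          obtain ⟨a, b, haX, haB, hbX, hbB, hab, hchar⟩ := gB4 z' hz'B hz'XB
          refine ⟨a, b, haX.1, hBV haB, hbX.1, hBV hbB, hab, ?_⟩
          intro w hw
          rcases hcases w hw with rfl | hwA | hwB
          · constructor
            · intro hadj
              rcases hzadj z' hz'V hadj with rfl | rfl
              · exact absurd hx₁.2 hz'X
              · exact absurd hx₂.2 hz'X
            · intro hor
              rcases hor with h1 | h1
              · exact absurd h1.symm (hBz a haB)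
              · exact absurd h1.symm (hBz b hbB)
          · constructor
            · intro hadj; exact absurd hadj.symm (hAB w hwA z' hz'B)
            · intro hor
              rcases hor with h1 | h1
              · exact hdAB a (h1 ▸ hwA) haB |>.elim
              · exact hdAB b (h1 ▸ hwA) hbB |>.elim
          · exact hchar w hwB
      · -- connectivity
        have hreachz : ∀ u ∈ VS, ReachIn T VS u z := by
          intro u hu
          rcases hcases u hu with rfl | huA | huB
          · exact ReachIn.refl
          · exact ((gA5 u huA x₁ hx₁.1).mono hAV).tail hx₁V hzV hadjzx₁.symm
          · exact ((gB5 u huB x₂ hx₂.1).mono hBV).tail hx₂V hzV hadjzx₂.symm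
        intro u hu v hv
        exact (hreachz u hu).trans (hreachz v hv).symm
      · -- acyclicity
        intro z' hz'V hz'X a ha b hb hza hzb hab hreach
        rcases hcases z' hz'V with rfl | hz'A | hz'B
        · have hmema : a = x₁ ∨ a = x₂ := (hzc a ha).mp hza
          have hmemb : b = x₁ ∨ b = x₂ := (hzc b hb).mp hzb
          have hclosA : ∀ p q, p ∈ A → q ∈ VS \ {z'} → T.Adj p q → q ∈ A := by
            intro p q hp hq hadj
            have : q ∈ A ∪ B := by rw [hABV]; exact hq
            rcases this with h1 | h1
            · exact h1
            · exact absurd hadj (hAB p hp q h1)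
          have hclosB : ∀ p q, p ∈ B → q ∈ VS \ {z'} → T.Adj p q → q ∈ B := by
            intro p q hp hq hadj
            have : q ∈ A ∪ B := by rw [hABV]; exact hq
            rcases this with h1 | h1
            · exact absurd hadj.symm (hAB q h1 p hp)
            · exact h1
          rcases hmema with rfl | rfl
          · rcases hmemb with rfl | rfl
            · exact hab rfl
            · exact hdAB b ((ReachIn.closed hclosA hx₁.1 hreach).1) hx₂.1
          · rcases hmemb with rfl | rfl
            · exact hdAB b hx₁.1 ((ReachIn.closed hclosB hx₂.1 hreach).1)
            · exact hab rfl
        · have hmem : ∀ c ∈ VS, T.Adj z' c → c ∈ A := by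
            intro c hc hadj
            rcases hcases c hc with rfl | h1 | h1
            · rcases hzadj z' hz'V hadj with rfl | rfl
              · exact absurd hx₁.2 hz'X
              · exact absurd hx₂.2 hz'X
            · exact h1
            · exact absurd hadj (hAB z' hz'A c h1)
          have hr' : ReachIn T (A \ {z'}) a b :=
            cross_reach hABV hd hAB hzc hx₁.1 hx₂.1 (hmem a ha hza) (hmem b hb hzb) hreach
          exact gA6 z' hz'A (fun h => hz'X h.1) a (hmem a ha hza) b (hmem b hb hzb) hza hzb hab hr'
        · have hmem : ∀ c ∈ VS, T.Adj z' c → c ∈ B := by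
            intro c hc hadj
            rcases hcases c hc with rfl | h1 | h1
            · rcases hzadj z' hz'V hadj with rfl | rfl
              · exact absurd hx₁.2 hz'X
              · exact absurd hx₂.2 hz'X
            · exact absurd hadj.symm (hAB c h1 z' hz'B)
            · exact h1
          have hABV' : B ∪ A = VS \ {z} := by rw [Set.union_comm]; exact hABV
          have hzc' : ∀ v ∈ VS, T.Adj z v ↔ v = x₂ ∨ v = x₁ := by
            intro v hv; rw [hzc v hv]; exact or_comm
          have hAB' : ∀ p ∈ B, ∀ q ∈ A, ¬ T.Adj p q :=
            fun p hp q hq hadj => hAB q hq p hp hadj.symm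
          have hr' : ReachIn T (B \ {z'}) a b :=
            cross_reach hABV' hd.symm hAB' hzc' hx₂.1 hx₁.1 (hmem a ha hza) (hmem b hb hzb) hreach
          exact gB6 z' hz'B (fun h => hz'X h.1) a (hmem a ha hza) b (hmem b hb hzb) hza hzb hab hr'

end LemmaFmain

section LemmaBk

variable {V : Type}

lemma goodOn_sstar [Fintype V] (T : SimpleGraph V) :
    ∀ (n : ℕ) (VS X : Set V), VS.ncard ≤ n → GoodOn T VS X →
      ∃ k, 1 ≤ k ∧ SStar k T VS X := by
  intro n
  induction n with
  | zero =>
      intro VS X hcard g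
      obtain ⟨hXV, ⟨x₀, hx₀⟩, -⟩ := g
      have : VS = ∅ := by
        have := Set.ncard_eq_zero (VS.toFinite) |>.mp (Nat.le_zero.mp hcard)
        exact this
      exact absurd (this ▸ hXV hx₀) (Set.notMem_empty x₀)
  | succ n ihn =>
      intro VS X hcard g
      obtain ⟨hXV, ⟨x₀, hx₀⟩, hbip, hdeg, hconn, hacyc⟩ := g
      by_cases hex : ∃ z ∈ VS, z ∉ X
      · obtain ⟨z, hzV, hzX⟩ := hex
        obtain ⟨a, b, haX, haV, hbX, hbV, hab, hchar⟩ := hdeg z hzV hzX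
        set A : Set V := {v | v ∈ VS \ {z} ∧ ReachIn T (VS \ {z}) a v} with hAdef
        set B : Set V := (VS \ {z}) \ A with hBdef
        have hAsub : A ⊆ VS \ {z} := fun v hv => hv.1
        have hBsub : B ⊆ VS \ {z} := fun v hv => hv.1
        have hABV : A ∪ B = VS \ {z} := Set.union_diff_cancel hAsub
        have hd : Disjoint A B := Set.disjoint_sdiff_right
        have haz : a ≠ z := fun h => hzX (h ▸ haX)
        have hbz : b ≠ z := fun h => hzX (h ▸ hbX)
        have haVz : a ∈ VS \ {z} := ⟨haV, by simpa using haz⟩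
        have hbVz : b ∈ VS \ {z} := ⟨hbV, by simpa using hbz⟩
        have haA : a ∈ A := ⟨haVz, ReachIn.refl⟩
        have hadjza : T.Adj z a := (hchar a haV).mpr (Or.inl rfl)
        have hadjzb : T.Adj z b := (hchar b hbV).mpr (Or.inr rfl)
        have hnreach : ¬ ReachIn T (VS \ {z}) a b :=
          hacyc z hzV hzX a haV b hbV hadjza hadjzb hab
        have hbB : b ∈ B := ⟨hbVz, fun hbA => hnreach hbA.2⟩
        have hAclosed : ∀ p q, p ∈ A → q ∈ VS \ {z} → T.Adj p q → q ∈ A :=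
          fun p q hp hq hadj => ⟨hq, hp.2.tail hp.1 hq hadj⟩
        have hnoAB : ∀ p ∈ A, ∀ q ∈ B, ¬ T.Adj p q :=
          fun p hp q hq hadj => hq.2 (hAclosed p q hp hq.1 hadj)
        have hBclosed : ∀ p q, p ∈ B → q ∈ VS \ {z} → T.Adj p q → q ∈ B :=
          fun p q hp hq hadj =>
            ⟨hq, fun hqA => hp.2 (hAclosed q p hqA hp.1 hadj.symm)⟩
        -- every vertex of `VS` other than `z` is reachable from `a` or from `b`
        have hclaim : ∀ u ∈ VS, u = z ∨ ReachIn T (VS \ {z}) a u ∨ ReachIn T (VS \ {z}) b u := by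
          intro u hu
          have h0 : ReachIn T VS a u := hconn a haV u hu
          clear hu
          induction h0 with
          | refl => exact Or.inr (Or.inl ReachIn.refl)
          | @tail p q hr hst ih =>
              obtain ⟨hpV, hqV, hadj⟩ := hst
              by_cases hqz : q = z
              · exact Or.inl hqz
              · have hqVz : q ∈ VS \ {z} := ⟨hqV, by simpa using hqz⟩
                by_cases hpz : p = z
                · subst hpz
                  rcases (hchar q hqV).mp hadj with rfl | rfl
                  · exact Or.inr (Or.inl ReachIn.refl)
                  · exact Or.inr (Or.inr ReachIn.refl)
                · have hpVz : p ∈ VS \ {z} := ⟨hpV, by simpa using hpz⟩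
                  rcases ih with rfl | hp | hp
                  · exact absurd rfl hpz
                  · exact Or.inr (Or.inl (hp.tail hpVz hqVz hadj))
                  · exact Or.inr (Or.inr (hp.tail hpVz hqVz hadj))
        have hAV : A ⊆ VS := fun p hp => (hAsub hp).1
        have hBV : B ⊆ VS := fun p hp => (hBsub hp).1
        have hAnz : ∀ p ∈ A, p ≠ z := fun p hp => by simpa using (hAsub hp).2
        have hBnz : ∀ p ∈ B, p ≠ z := fun p hp => by simpa using (hBsub hp).2
        have hnbrA : ∀ z'' ∈ A, z'' ∉ X → ∀ c ∈ VS, T.Adj z'' c → c ∈ A := by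
          intro z'' hz'' hz''X c hc hadj
          have hcz : c ≠ z := by
            rintro rfl
            rcases (hchar z'' (hAV hz'')).mp hadj.symm with rfl | rfl
            · exact hz''X haX
            · exact hz''X hbX
          exact hAclosed z'' c hz'' ⟨hc, by simpa using hcz⟩ hadj
        have hnbrB : ∀ z'' ∈ B, z'' ∉ X → ∀ c ∈ VS, T.Adj z'' c → c ∈ B := by
          intro z'' hz'' hz''X c hc hadj
          have hcz : c ≠ z := by
            rintro rfl
            rcases (hchar z'' (hBV hz'')).mp hadj.symm with rfl | rfl
            · exact hz''X haX
            · exact hz''X hbX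
          exact hBclosed z'' c hz'' ⟨hc, by simpa using hcz⟩ hadj
        have gA : GoodOn T A (X ∩ A) := by
          refine ⟨fun v hv => hv.2, ⟨a, haX, haA⟩, ?_, ?_, ?_, ?_⟩
          · intro u hu v hv hadj
            have := hbip u (hAV hu) v (hAV hv) hadj
            simp only [Set.mem_inter_iff, hu, hv, and_true]
            exact this
          · intro z'' hz'' hz''X
            have hz''Xout : z'' ∉ X := fun h => hz''X ⟨h, hz''⟩
            obtain ⟨a'', b'', ha''X, ha''V, hb''X, hb''V, hab'', hchar''⟩ :=
              hdeg z'' (hAV hz'') hz''Xout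
            have ha''A : a'' ∈ A :=
              hnbrA z'' hz'' hz''Xout a'' ha''V ((hchar'' a'' ha''V).mpr (Or.inl rfl))
            have hb''A : b'' ∈ A :=
              hnbrA z'' hz'' hz''Xout b'' hb''V ((hchar'' b'' hb''V).mpr (Or.inr rfl))
            exact ⟨a'', b'', ⟨ha''X, ha''A⟩, ha''A, ⟨hb''X, hb''A⟩, hb''A, hab'',
              fun w hw => hchar'' w (hAV hw)⟩
          · intro u hu v hv
            exact (ReachIn.closed hAclosed hu ((hu.2.symm).trans hv.2)).2
          · intro z'' hz'' hz''X a'' ha'' b'' hb'' h1 h2 hne hr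
            exact hacyc z'' (hAV hz'') (fun h => hz''X ⟨h, hz''⟩) a'' (hAV ha'') b'' (hAV hb'')
              h1 h2 hne (hr.mono (fun p hp => ⟨hAV hp.1, hp.2⟩))
        have gB : GoodOn T B (X ∩ B) := by
          refine ⟨fun v hv => hv.2, ⟨b, hbX, hbB⟩, ?_, ?_, ?_, ?_⟩
          · intro u hu v hv hadj
            have := hbip u (hBV hu) v (hBV hv) hadj
            simp only [Set.mem_inter_iff, hu, hv, and_true]
            exact this
          · intro z'' hz'' hz''X
            have hz''Xout : z'' ∉ X := fun h => hz''X ⟨h, hz''⟩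
            obtain ⟨a'', b'', ha''X, ha''V, hb''X, hb''V, hab'', hchar''⟩ :=
              hdeg z'' (hBV hz'') hz''Xout
            have ha''B : a'' ∈ B :=
              hnbrB z'' hz'' hz''Xout a'' ha''V ((hchar'' a'' ha''V).mpr (Or.inl rfl))
            have hb''B : b'' ∈ B :=
              hnbrB z'' hz'' hz''Xout b'' hb''V ((hchar'' b'' hb''V).mpr (Or.inr rfl))
            exact ⟨a'', b'', ⟨ha''X, ha''B⟩, ha''B, ⟨hb''X, hb''B⟩, hb''B, hab'',
              fun w hw => hchar'' w (hBV hw)⟩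
          · intro u hu v hv
            have hu' : ReachIn T (VS \ {z}) b u := by
              rcases hclaim u (hBV hu) with h1 | h1 | h1
              · exact absurd h1 (hBnz u hu)
              · exact absurd (⟨hBsub hu, h1⟩ : u ∈ A) hu.2
              · exact h1
            have hv' : ReachIn T (VS \ {z}) b v := by
              rcases hclaim v (hBV hv) with h1 | h1 | h1
              · exact absurd h1 (hBnz v hv)
              · exact absurd (⟨hBsub hv, h1⟩ : v ∈ A) hv.2
              · exact h1
            exact (ReachIn.closed hBclosed hu ((hu'.symm).trans hv')).2
          · intro z'' hz'' hz''X a'' ha'' b'' hb'' h1 h2 hne hr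
            exact hacyc z'' (hBV hz'') (fun h => hz''X ⟨h, hz''⟩) a'' (hBV ha'') b'' (hBV hb'')
              h1 h2 hne (hr.mono (fun p hp => ⟨hBV hp.1, hp.2⟩))
        have hcardA : A.ncard ≤ n := by
          have h1 : A.ncard ≤ (VS \ {z}).ncard :=
            Set.ncard_le_ncard hAsub (VS \ {z}).toFinite
          have h2 : (VS \ {z}).ncard < VS.ncard :=
            Set.ncard_diff_singleton_lt_of_mem hzV VS.toFinite
          omega
        have hcardB : B.ncard ≤ n := by
          have h1 : B.ncard ≤ (VS \ {z}).ncard :=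
            Set.ncard_le_ncard hBsub (VS \ {z}).toFinite
          have h2 : (VS \ {z}).ncard < VS.ncard :=
            Set.ncard_diff_singleton_lt_of_mem hzV VS.toFinite
          omega
        obtain ⟨kA, hkA1, hSA⟩ := ihn A (X ∩ A) hcardA gA
        obtain ⟨kB, hkB1, hSB⟩ := ihn B (X ∩ B) hcardB gB
        rcases le_or_gt kB kA with hle | hlt
        · obtain ⟨m, rfl⟩ : ∃ m, kA = m + 1 := ⟨kA - 1, by omega⟩
          refine ⟨m + 2, by omega, ?_⟩
          rw [show m + 2 = m.succ.succ from rfl, SStar.eq_3]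
          exact ⟨z, A, B, a, b, hzV, hzX, hXV, hABV, hd, ⟨haA, haX⟩, ⟨hbB, hbX⟩, hchar,
            hnoAB, hSA, kB, ⟨hkB1, by omega⟩, hSB⟩
        · obtain ⟨m, rfl⟩ : ∃ m, kB = m + 1 := ⟨kB - 1, by omega⟩
          refine ⟨m + 2, by omega, ?_⟩
          rw [show m + 2 = m.succ.succ from rfl, SStar.eq_3]
          exact ⟨z, B, A, b, a, hzV, hzX, hXV, by rw [Set.union_comm]; exact hABV, hd.symm,
            ⟨hbB, hbX⟩, ⟨haA, haX⟩, fun v hv => by rw [hchar v hv]; exact or_comm,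
            fun p hp q hq hadj => hnoAB q hq p hp hadj.symm, hSB, kA, ⟨hkA1, by omega⟩, hSA⟩
      · -- `VS ⊆ X`: then `VS = {x₀}`
        push_neg at hex
        have hsing : ∀ v ∈ VS, v = x₀ := by
          intro v hv
          rcases Relation.ReflTransGen.cases_head (hconn v hv x₀ (hXV hx₀)) with h1 | ⟨c, hc, -⟩
          · exact h1
          · obtain ⟨hvV, hcV, hadj⟩ := hc
            exact absurd (hex c hcV) ((hbip v hvV c hcV hadj).mp (hex v hvV))
        have hVS : VS = {x₀} := Set.eq_singleton_iff_unique_mem.mpr ⟨hXV hx₀, hsing⟩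
        have hX : X = {x₀} := Set.eq_singleton_iff_unique_mem.mpr
          ⟨hx₀, fun v hv => hsing v (hXV hv)⟩
        exact ⟨1, le_refl 1, by rw [SStar.eq_2]; exact ⟨x₀, hVS, hX⟩⟩

end LemmaBk

section LemmaH

variable {U : Type} {G : SimpleGraph U}

lemma subdiv_adj_inl_inl {u v : U} :
    ¬ (subdivisionGraph G).Adj (Sum.inl u) (Sum.inl v) := by
  rw [subdivisionGraph, SimpleGraph.fromRel_adj]
  rintro ⟨-, (⟨w, e, h1, h2, -⟩ | ⟨w, e, h1, h2, -⟩)⟩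
  · exact nomatch h2
  · exact nomatch h2

lemma subdiv_adj_inr_inr {e f : G.edgeSet} :
    ¬ (subdivisionGraph G).Adj (Sum.inr e) (Sum.inr f) := by
  rw [subdivisionGraph, SimpleGraph.fromRel_adj]
  rintro ⟨-, (⟨w, e', h1, h2, -⟩ | ⟨w, e', h1, h2, -⟩)⟩
  · exact nomatch h1
  · exact nomatch h1

lemma subdiv_adj_inl_inr {u : U} {e : G.edgeSet} :
    (subdivisionGraph G).Adj (Sum.inl u) (Sum.inr e) ↔ u ∈ (e : Sym2 U) := by
  rw [subdivisionGraph, SimpleGraph.fromRel_adj]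
  constructor
  · rintro ⟨-, (⟨w, e', h1, h2, hm⟩ | ⟨w, e', h1, h2, -⟩)⟩
    · cases h1; cases h2; exact hm
    · exact nomatch h1
  · intro hm
    exact ⟨by simp, Or.inl ⟨u, e, rfl, rfl, hm⟩⟩

lemma subdiv_adj_inr_inl {u : U} {e : G.edgeSet} :
    (subdivisionGraph G).Adj (Sum.inr e) (Sum.inl u) ↔ u ∈ (e : Sym2 U) := by
  rw [SimpleGraph.adj_comm]; exact subdiv_adj_inl_inr

lemma subdiv_deg2 (e : Sym2 U) : ∀ (he : e ∈ G.edgeSet),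
    ∃ u v : U, u ≠ v ∧ ∀ w, (subdivisionGraph G).Adj (Sum.inr ⟨e, he⟩) w ↔
      (w = Sum.inl u ∨ w = Sum.inl v) := by
  induction e using Sym2.ind with
  | _ u v =>
    intro he
    have hadj : G.Adj u v := he
    refine ⟨u, v, hadj.ne, ?_⟩
    rintro (c | f)
    · rw [subdiv_adj_inr_inl]
      constructor
      · intro h
        rcases Sym2.mem_iff.mp h with rfl | rfl
        · exact Or.inl rfl
        · exact Or.inr rfl
      · rintro (h | h) <;> cases h
        · exact Sym2.mem_mk_left _ _
        · exact Sym2.mem_mk_right _ _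
    · exact iff_of_false subdiv_adj_inr_inr (by rintro (h | h) <;> exact nomatch h)

lemma subdiv_main_acyc (hac : G.IsAcyclic) (u v : U) (he : s(u,v) ∈ G.edgeSet) :
    ¬ ReachIn (subdivisionGraph G) (Set.univ \ {Sum.inr ⟨s(u,v), he⟩})
      (Sum.inl u) (Sum.inl v) := by
  intro hr
  have hadj : G.Adj u v := he
  have hbr := (SimpleGraph.isBridge_iff.mp
    (SimpleGraph.isAcyclic_iff_forall_adj_isBridge.mp hac hadj))
  set G' := G \ SimpleGraph.fromEdgeSet {s(u,v)} with hG'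
  set z : U ⊕ G.edgeSet := Sum.inr ⟨s(u,v), he⟩ with hz
  have key : ∀ p, ReachIn (subdivisionGraph G) (Set.univ \ {z}) (Sum.inl u) p →
      Sum.elim (fun d => Relation.ReflTransGen G'.Adj u d)
        (fun e' : G.edgeSet => ∀ c, c ∈ (e' : Sym2 U) →
          Relation.ReflTransGen G'.Adj u c) p := by
    intro p hp
    induction hp with
    | refl => exact Relation.ReflTransGen.refl
    | @tail p q hr1 hst ih =>
        obtain ⟨hpS, hqS, hadj'⟩ := hst
        cases p with
        | inl d =>
            cases q with
            | inl d' => exact absurd hadj' subdiv_adj_inl_inl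
            | inr e' =>
                have hd : d ∈ (e' : Sym2 U) := subdiv_adj_inl_inr.mp hadj'
                have hne : e' ≠ (⟨s(u,v), he⟩ : G.edgeSet) := by
                  intro hh
                  exact hqS.2 (by rw [hz, hh]; rfl)
                intro c hc
                obtain ⟨d₂, hd₂⟩ := Sym2.mem_iff_exists.mp hd
                have hGdd : G.Adj d d₂ := by
                  have h2 := e'.2
                  rw [hd₂] at h2
                  exact h2
                have hstep : G'.Adj d d₂ := by
                  rw [hG', SimpleGraph.sdiff_adj]
                  refine ⟨hGdd, ?_⟩
                  rw [SimpleGraph.fromEdgeSet_adj]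
                  rintro ⟨h1, -⟩
                  exact hne (Subtype.ext (by rw [hd₂]; simpa using h1))
                rw [hd₂] at hc
                rcases Sym2.mem_iff.mp hc with rfl | rfl
                · exact ih
                · exact ih.tail hstep
        | inr e' =>
            cases q with
            | inl d' => exact ih d' (subdiv_adj_inr_inl.mp hadj')
            | inr f' => exact absurd hadj' subdiv_adj_inr_inr
  have := key (Sum.inl v) hr
  exact hbr ((SimpleGraph.reachable_iff_reflTransGen u v).mpr this)

lemma tree_goodOn (hG : G.IsTree) :
    GoodOn (subdivisionGraph G) Set.univ (Set.range Sum.inl) := by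
  obtain ⟨u₀⟩ : Nonempty U := hG.isConnected.nonempty
  refine ⟨fun _ _ => trivial, ⟨Sum.inl u₀, u₀, rfl⟩, ?_, ?_, ?_, ?_⟩
  · -- bipartite
    rintro (u | e) - (v | f) - hadj
    · exact absurd hadj subdiv_adj_inl_inl
    · exact iff_of_true ⟨u, rfl⟩ (by rintro ⟨w, hw⟩; exact nomatch hw)
    · exact iff_of_false (by rintro ⟨w, hw⟩; exact nomatch hw)
        (not_not_intro ⟨v, rfl⟩)
    · exact absurd hadj subdiv_adj_inr_inr
  · -- degree two
    rintro (u | ⟨e, he⟩) - hzX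
    · exact absurd ⟨u, rfl⟩ hzX
    · obtain ⟨u, v, huv, hchar⟩ := subdiv_deg2 e he
      exact ⟨Sum.inl u, Sum.inl v, ⟨u, rfl⟩, Set.mem_univ _, ⟨v, rfl⟩, Set.mem_univ _,
        fun h => huv (Sum.inl.inj h), fun w _ => hchar w⟩
  · -- connectivity
    have hstep : ∀ u v : U, G.Adj u v →
        ReachIn (subdivisionGraph G) Set.univ (Sum.inl u) (Sum.inl v) := by
      intro u v h
      have he : s(u,v) ∈ G.edgeSet := h
      have h1 : (subdivisionGraph G).Adj (Sum.inl u) (Sum.inr ⟨s(u,v), he⟩) :=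
        subdiv_adj_inl_inr.mpr (Sym2.mem_mk_left _ _)
      have h2 : (subdivisionGraph G).Adj (Sum.inr ⟨s(u,v), he⟩) (Sum.inl v) :=
        subdiv_adj_inr_inl.mpr (Sym2.mem_mk_right _ _)
      exact (ReachIn.single (Set.mem_univ _) (Set.mem_univ _) h1).tail
        (Set.mem_univ _) (Set.mem_univ _) h2
    have hUU : ∀ u v : U, ReachIn (subdivisionGraph G) Set.univ (Sum.inl u) (Sum.inl v) := by
      intro u v
      have hr : Relation.ReflTransGen G.Adj u v :=
        (SimpleGraph.reachable_iff_reflTransGen u v).mp (hG.isConnected.preconnected u v)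
      induction hr with
      | refl => exact ReachIn.refl
      | tail h1 h2 ih => exact ih.trans (hstep _ _ h2)
    have hany : ∀ p : U ⊕ G.edgeSet, ∃ u : U,
        ReachIn (subdivisionGraph G) Set.univ p (Sum.inl u) := by
      rintro (u | ⟨e, he⟩)
      · exact ⟨u, ReachIn.refl⟩
      · obtain ⟨u, v, huv, hchar⟩ := subdiv_deg2 e he
        exact ⟨u, ReachIn.single (Set.mem_univ _) (Set.mem_univ _)
          ((hchar (Sum.inl u)).mpr (Or.inl rfl))⟩
    rintro p - q -
    obtain ⟨u, hp⟩ := hany p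
    obtain ⟨v, hq⟩ := hany q
    exact hp.trans ((hUU u v).trans hq.symm)
  · -- acyclicity
    rintro (u | ⟨e, he⟩) - hzX a - b - hza hzb hab hr
    · exact absurd ⟨u, rfl⟩ hzX
    · obtain ⟨u, v, huv, hchar⟩ := subdiv_deg2 e he
      have hu : u ∈ e := subdiv_adj_inr_inl.mp ((hchar (Sum.inl u)).mpr (Or.inl rfl))
      have hv : v ∈ e := subdiv_adj_inr_inl.mp ((hchar (Sum.inl v)).mpr (Or.inr rfl))
      have hesv : e = s(u,v) := by
        obtain ⟨w, hw⟩ := Sym2.mem_iff_exists.mp hu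
        subst hw
        rcases Sym2.mem_iff.mp hv with rfl | rfl
        · exact absurd rfl huv
        · rfl
      subst hesv
      have main := subdiv_main_acyc hG.IsAcyclic u v he
      rcases (hchar a).mp hza with rfl | rfl <;> rcases (hchar b).mp hzb with rfl | rfl
      · exact hab rfl
      · exact main hr
      · exact main hr.symm
      · exact hab rfl

end LemmaH

section Transfer

variable {V W : Type} {T : SimpleGraph V} {T' : SimpleGraph W}

lemma reachIn_map_iso (e : T ≃g T') (S : Set V) {u v : V} (h : ReachIn T S u v) :
    ReachIn T' {w | e.symm w ∈ S} (e u) (e v) := by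
  induction h with
  | refl => exact ReachIn.refl
  | @tail p q h1 hst ih =>
      refine ih.tail ?_ ?_ (e.map_adj_iff.mpr hst.2.2)
      · show e.symm (e p) ∈ S
        rw [e.symm_apply_apply]
        exact hst.1
      · show e.symm (e q) ∈ S
        rw [e.symm_apply_apply]
        exact hst.2.1

lemma goodOn_pullback (e : T ≃g T') (X' : Set W) (g : GoodOn T' Set.univ X') :
    GoodOn T Set.univ ((e : V → W) ⁻¹' X') := by
  obtain ⟨-, ⟨x', hx'⟩, hbip, hdeg, hconn, hacyc⟩ := g
  refine ⟨fun _ _ => trivial, ⟨e.symm x', ?_⟩, ?_, ?_, ?_, ?_⟩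
  · show e (e.symm x') ∈ X'
    rw [e.apply_symm_apply]
    exact hx'
  · intro u _ v _ hadj
    exact hbip (e u) trivial (e v) trivial (e.map_adj_iff.mpr hadj)
  · intro z _ hzX
    obtain ⟨a', b', ha'X, -, hb'X, -, hab', hchar'⟩ := hdeg (e z) trivial hzX
    refine ⟨e.symm a', e.symm b', ?_, trivial, ?_, trivial, ?_, ?_⟩
    · show e (e.symm a') ∈ X'; rw [e.apply_symm_apply]; exact ha'X
    · show e (e.symm b') ∈ X'; rw [e.apply_symm_apply]; exact hb'X
    · intro h
      apply hab'
      have := congrArg e h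
      rwa [e.apply_symm_apply, e.apply_symm_apply] at this
    · intro w _
      rw [show T.Adj z w ↔ T'.Adj (e z) (e w) from e.map_adj_iff.symm,
        hchar' (e w) trivial]
      constructor
      · rintro (h | h)
        · exact Or.inl (by rw [← h, e.symm_apply_apply])
        · exact Or.inr (by rw [← h, e.symm_apply_apply])
      · rintro (h | h)
        · exact Or.inl (by rw [h, e.apply_symm_apply])
        · exact Or.inr (by rw [h, e.apply_symm_apply])
  · intro u _ v _
    have h1 := hconn (e u) trivial (e v) trivial
    have h2 := reachIn_map_iso e.symm Set.univ h1
    have h3 : ReachIn T Set.univ (e.symm (e u)) (e.symm (e v)) :=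
      h2.mono (fun _ _ => trivial)
    rwa [e.symm_apply_apply, e.symm_apply_apply] at h3
  · intro z _ hzX a _ b _ hza hzb hab hr
    have h1 := reachIn_map_iso e (Set.univ \ {z}) hr
    have h2 : ReachIn T' (Set.univ \ {e z}) (e a) (e b) := by
      refine h1.mono ?_
      intro w hw
      refine ⟨trivial, ?_⟩
      intro hh
      simp only [Set.mem_singleton_iff] at hh
      apply hw.2
      rw [hh, e.symm_apply_apply]
      rfl
    exact hacyc (e z) trivial hzX (e a) trivial (e b) trivial
      (e.map_adj_iff.mpr hza) (e.map_adj_iff.mpr hzb)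
      (fun h => hab (e.injective h)) h2

end Transfer

section LemmaG

variable {V : Type}

lemma goodOn_tree_iso (T : SimpleGraph V) (X : Set V) (g : GoodOn T Set.univ X) :
    ∃ (U : Type) (G : SimpleGraph U), G.IsTree ∧
      Nonempty (T ≃g subdivisionGraph G) := by
  classical
  obtain ⟨-, ⟨x₀, hx₀⟩, hbip, hdeg, hconn, hacyc⟩ := g
  set G : SimpleGraph ↥X :=
    { Adj := fun u v => u ≠ v ∧ ∃ z, z ∉ X ∧ T.Adj ↑u z ∧ T.Adj ↑v z,
      symm := ⟨by rintro u v ⟨hne, z, hz, h1, h2⟩; exact ⟨hne.symm, z, hz, h2, h1⟩⟩,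
      loopless := ⟨fun u h => h.1 rfl⟩ } with hGdef
  have wit_unique : ∀ (u v : V), u ≠ v → ∀ z z', z ∉ X → z' ∉ X →
      T.Adj u z → T.Adj v z → T.Adj u z' → T.Adj v z' → z = z' := by
    intro u v huv z z' hz hz' h1 h2 h3 h4
    by_contra hne
    apply hacyc z trivial hz u trivial v trivial h1.symm h2.symm huv
    have m1 : u ∈ Set.univ \ {z} := ⟨trivial, by simpa using h1.ne⟩
    have m2 : z' ∈ Set.univ \ {z} :=
      ⟨trivial, by simpa using fun hh : z' = z => hne hh.symm⟩
    have m3 : v ∈ Set.univ \ {z} := ⟨trivial, by simpa using h2.ne⟩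
    exact (ReachIn.single m1 m2 h3).tail m2 m3 h4.symm
  have hdeg' : ∀ z : V, z ∉ X → ∃ p : ↥X × ↥X, p.1 ≠ p.2 ∧
      ∀ w, T.Adj z w ↔ w = ↑p.1 ∨ w = ↑p.2 := by
    intro z hz
    obtain ⟨a, b, haX, -, hbX, -, hab, hchar⟩ := hdeg z trivial hz
    exact ⟨(⟨a, haX⟩, ⟨b, hbX⟩), fun h => hab (congrArg Subtype.val h),
      fun w => hchar w trivial⟩
  choose ep hepne hchar using hdeg'
  have hadj1 : ∀ z (hz : z ∉ X), T.Adj z ↑(ep z hz).1 :=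
    fun z hz => (hchar z hz ↑(ep z hz).1).mpr (Or.inl rfl)
  have hadj2 : ∀ z (hz : z ∉ X), T.Adj z ↑(ep z hz).2 :=
    fun z hz => (hchar z hz ↑(ep z hz).2).mpr (Or.inr rfl)
  have hGadj : ∀ z (hz : z ∉ X), G.Adj (ep z hz).1 (ep z hz).2 :=
    fun z hz => ⟨hepne z hz, z, hz, (hadj1 z hz).symm, (hadj2 z hz).symm⟩
  set f : V → ↥X ⊕ G.edgeSet := fun v =>
    if h : v ∈ X then Sum.inl ⟨v, h⟩
    else Sum.inr ⟨s((ep v h).1, (ep v h).2), (SimpleGraph.mem_edgeSet G).mpr (hGadj v h)⟩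
    with hfdef
  have hfX : ∀ p (hp : p ∈ X), f p = Sum.inl ⟨p, hp⟩ := fun p hp => dif_pos hp
  have hfnX : ∀ p (hp : p ∉ X), f p = Sum.inr ⟨s((ep p hp).1, (ep p hp).2),
      (SimpleGraph.mem_edgeSet G).mpr (hGadj p hp)⟩ := fun p hp => dif_neg hp
  -- injectivity
  have hfinj : Function.Injective f := by
    intro p q hpq
    by_cases hp : p ∈ X <;> by_cases hq : q ∈ X
    · rw [hfX p hp, hfX q hq] at hpq
      exact congrArg Subtype.val (Sum.inl.inj hpq)
    · rw [hfX p hp, hfnX q hq] at hpq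
      exact nomatch hpq
    · rw [hfnX p hp, hfX q hq] at hpq
      exact nomatch hpq
    · rw [hfnX p hp, hfnX q hq] at hpq
      have h3 : s((ep p hp).1, (ep p hp).2) = s((ep q hq).1, (ep q hq).2) :=
        congrArg Subtype.val (Sum.inr.inj hpq)
      have hA1 : T.Adj (↑(ep p hp).1) q ∧ T.Adj (↑(ep p hp).2) q := by
        rcases Sym2.eq_iff.mp h3 with ⟨h4, h5⟩ | ⟨h4, h5⟩
        · exact ⟨h4 ▸ (hadj1 q hq).symm, h5 ▸ (hadj2 q hq).symm⟩
        · exact ⟨h4 ▸ (hadj2 q hq).symm, h5 ▸ (hadj1 q hq).symm⟩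
      exact wit_unique (↑(ep p hp).1) (↑(ep p hp).2)
        (fun hh => hepne p hp (Subtype.ext hh)) p q hp hq
        (hadj1 p hp).symm (hadj2 p hp).symm hA1.1 hA1.2
  -- surjectivity
  have hfsurj : Function.Surjective f := by
    rintro (⟨x, hx⟩ | ⟨e, he⟩)
    · exact ⟨x, hfX x hx⟩
    · revert he
      induction e using Sym2.ind with
      | _ u v =>
        intro he
        obtain ⟨huv, z, hz, h1, h2⟩ := (SimpleGraph.mem_edgeSet G).mp he
        refine ⟨z, ?_⟩
        rw [hfnX z hz]
        refine congrArg Sum.inr (Subtype.ext ?_)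
        show s((ep z hz).1, (ep z hz).2) = s(u, v)
        have hu : u = (ep z hz).1 ∨ u = (ep z hz).2 := by
          rcases (hchar z hz ↑u).mp h1.symm with h' | h'
          · exact Or.inl (Subtype.ext h')
          · exact Or.inr (Subtype.ext h')
        have hv : v = (ep z hz).1 ∨ v = (ep z hz).2 := by
          rcases (hchar z hz ↑v).mp h2.symm with h' | h'
          · exact Or.inl (Subtype.ext h')
          · exact Or.inr (Subtype.ext h')
        rcases hu with rfl | rfl <;> rcases hv with rfl | rfl
        · exact absurd rfl huv
        · rfl
        · exact Sym2.eq_swap.symm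
        · exact absurd rfl huv
  -- adjacency correspondence
  have hadj_iff : ∀ p q : V, T.Adj p q ↔ (subdivisionGraph G).Adj (f p) (f q) := by
    intro p q
    by_cases hp : p ∈ X <;> by_cases hq : q ∈ X
    · rw [hfX p hp, hfX q hq]
      refine iff_of_false ?_ subdiv_adj_inl_inl
      intro h
      exact absurd ((hbip p trivial q trivial h).mp hp) (not_not_intro hq)
    · rw [hfX p hp, hfnX q hq, subdiv_adj_inl_inr, Sym2.mem_iff]
      constructor
      · intro h
        rcases (hchar q hq p).mp h.symm with h' | h'
        · exact Or.inl (Subtype.ext h')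
        · exact Or.inr (Subtype.ext h')
      · rintro (h' | h')
        · exact ((hchar q hq p).mpr (Or.inl (congrArg Subtype.val h'))).symm
        · exact ((hchar q hq p).mpr (Or.inr (congrArg Subtype.val h'))).symm
    · rw [hfnX p hp, hfX q hq, subdiv_adj_inr_inl, Sym2.mem_iff]
      constructor
      · intro h
        rcases (hchar p hp q).mp h with h' | h'
        · exact Or.inl (Subtype.ext h')
        · exact Or.inr (Subtype.ext h')
      · rintro (h' | h')
        · exact (hchar p hp q).mpr (Or.inl (congrArg Subtype.val h'))
        · exact (hchar p hp q).mpr (Or.inr (congrArg Subtype.val h'))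
    · rw [hfnX p hp, hfnX q hq]
      refine iff_of_false ?_ subdiv_adj_inr_inr
      intro h
      exact absurd ((hbip p trivial q trivial h).mpr hq) hp
  -- connectivity of G
  have hXne : Nonempty ↥X := ⟨⟨x₀, hx₀⟩⟩
  have hGconn : G.Connected := by
    refine SimpleGraph.Connected.mk ?_
    intro u v
    have key : ∀ w, ReachIn T Set.univ ↑u w →
        ∀ x : ↥X, (w = ↑x ∨ T.Adj w ↑x) → G.Reachable u x := by
      intro w hw
      induction hw with
      | refl =>
          rintro x (h | h)
          · exact (Subtype.ext h) ▸ SimpleGraph.Reachable.refl u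
          · exact absurd ((hbip ↑u trivial ↑x trivial h).mp u.2) (not_not_intro x.2)
      | @tail p q h1 hst ih =>
          have hadj : T.Adj p q := hst.2.2
          rintro x (h | h)
          · by_cases hpX : p ∈ X
            · exact absurd ((hbip p trivial q trivial hadj).mp hpX)
                (not_not_intro (h ▸ x.2))
            · exact ih x (Or.inr (h ▸ hadj))
          · by_cases hqX : q ∈ X
            · exact absurd ((hbip q trivial ↑x trivial h).mp hqX) (not_not_intro x.2)
            · by_cases hpX : p ∈ X
              · have hru : G.Reachable u ⟨p, hpX⟩ := ih ⟨p, hpX⟩ (Or.inl rfl)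
                by_cases hpx : (⟨p, hpX⟩ : ↥X) = x
                · exact hpx ▸ hru
                · exact hru.trans (SimpleGraph.Adj.reachable
                    ⟨hpx, q, hqX, hadj, h.symm⟩)
              · exact absurd ((hbip p trivial q trivial hadj).mpr hqX) hpX
    exact key ↑v (hconn ↑u trivial ↑v trivial) v (Or.inl rfl)
  -- acyclicity of G
  have hGacyc : G.IsAcyclic := by
    rw [SimpleGraph.isAcyclic_iff_forall_adj_isBridge]
    intro x y hxy
    rw [SimpleGraph.isBridge_iff]
    intro hreach
    obtain ⟨hne, z, hz, h1, h2⟩ := hxy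
    have hvalne : (↑x : V) ≠ ↑y := fun hh => hne (Subtype.ext hh)
    apply hacyc z trivial hz ↑x trivial ↑y trivial h1.symm h2.symm hvalne
    have hmem : ∀ w : ↥X, T.Adj ↑w z → w = x ∨ w = y := by
      intro w hw
      rcases (hchar z hz ↑w).mp hw.symm with h' | h' <;>
        rcases (hchar z hz ↑x).mp h1.symm with hx1 | hx1 <;>
        rcases (hchar z hz ↑y).mp h2.symm with hy1 | hy1
      · exact Or.inl (Subtype.ext (h'.trans hx1.symm))
      · exact Or.inl (Subtype.ext (h'.trans hx1.symm))
      · exact Or.inr (Subtype.ext (h'.trans hy1.symm))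
      · exact absurd (Subtype.ext (hx1.trans hy1.symm) : x = y) hne
      · exact absurd (Subtype.ext (hx1.trans hy1.symm) : x = y) hne
      · exact Or.inr (Subtype.ext (h'.trans hy1.symm))
      · exact Or.inl (Subtype.ext (h'.trans hx1.symm))
      · exact Or.inl (Subtype.ext (h'.trans hx1.symm))
    have hr : Relation.ReflTransGen (G \ SimpleGraph.fromEdgeSet {s(x,y)}).Adj x y :=
      (SimpleGraph.reachable_iff_reflTransGen x y).mp hreach
    have key : ∀ (c d : ↥X),
        Relation.ReflTransGen (G \ SimpleGraph.fromEdgeSet {s(x,y)}).Adj c d →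
        ReachIn T (Set.univ \ {z}) ↑c ↑d := by
      intro c d h
      induction h with
      | refl => exact ReachIn.refl
      | @tail p q h1 hstep ih =>
          rw [SimpleGraph.sdiff_adj] at hstep
          obtain ⟨⟨hpq, z', hz', hA1, hA2⟩, hnot⟩ := hstep
          rw [SimpleGraph.fromEdgeSet_adj] at hnot
          have hzz' : z' ≠ z := by
            rintro rfl
            apply hnot
            refine ⟨?_, hpq⟩
            rcases hmem p hA1 with rfl | rfl <;> rcases hmem q hA2 with rfl | rfl
            · exact absurd rfl hpq
            · rfl
            · exact Sym2.eq_swap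
            · exact absurd rfl hpq
          have m1 : (↑p : V) ∈ Set.univ \ {z} :=
            ⟨trivial, by simpa using fun hh : (↑p : V) = z => hz (hh ▸ p.2)⟩
          have m2 : z' ∈ Set.univ \ {z} := ⟨trivial, by simpa using hzz'⟩
          have m3 : (↑q : V) ∈ Set.univ \ {z} :=
            ⟨trivial, by simpa using fun hh : (↑q : V) = z => hz (hh ▸ q.2)⟩
          exact (ih.tail m1 m2 hA1).tail m2 m3 hA2.symm
    exact key x y hr
  exact ⟨↥X, G, ⟨hGconn, hGacyc⟩,
    ⟨⟨Equiv.ofBijective f ⟨hfinj, hfsurj⟩, fun {a b} => (hadj_iff a b).symm⟩⟩⟩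

end LemmaG


/-- The union `S = ∪_{k ≥ 1} S_k` is exactly the class of subdivision graphs of
trees. -/
theorem stmt_4 {V : Type} [Fintype V] (T : SimpleGraph V) :
    (∃ (k : ℕ) (X : Set V), 1 ≤ k ∧ SFamily k T X) ↔
      (∃ (U : Type) (G : SimpleGraph U), G.IsTree ∧
        Nonempty (T ≃g subdivisionGraph G)) := by
  constructor
  · rintro ⟨k, X, hk, hS⟩
    have hS1 : SStar k T Set.univ X := hS.1
    exact goodOn_tree_iso T X (sstar_goodOn T k Set.univ X hS1)
  · rintro ⟨U, G, hG, ⟨e⟩⟩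
    have g : GoodOn T Set.univ ((e : V → U ⊕ G.edgeSet) ⁻¹' Set.range Sum.inl) :=
      goodOn_pullback e _ (tree_goodOn hG)
    obtain ⟨k, hk1, hS⟩ :=
      goodOn_sstar T (Set.univ : Set V).ncard Set.univ _ le_rfl g
    have hex : ∃ k, SStar k T Set.univ
        ((e : V → U ⊕ G.edgeSet) ⁻¹' Set.range Sum.inl) := ⟨k, hS⟩
    refine ⟨Nat.find hex, _, ?_, Nat.find_spec hex, fun i hi => Nat.find_min hex hi⟩
    by_contra hlt
    have h0 : Nat.find hex = 0 := by omega
    have hsp := Nat.find_spec hex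
    rw [h0, SStar.eq_1] at hsp
    exact hsp
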